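/- For every integer l ≥ 3, the currency B_l = (1, 2, 3, …, l−1, 2l−2, 2l−1, 4l−4) (with l + 2 coins: a_i = i + 1 for 0 ≤ i ≤ l − 2, a_{l−1} = 2l − 2, a_l = 2l − 1, a_{l+1} = 4l − 4) is orderly, while its prefix currency (1, 2, 3, …, l−1, 2l−2, 2l−1) is not orderly. -/
import Mathlib
set_option maxHeartbeats 1000000


/-- The largest coin of the currency with coins `a 0, …, a k` that is `≤ c`
(or `0` if there is none). -/
def bestCoin (a : ℕ → ℕ) (k : ℕ) (c : ℕ) : ℕ :=
  ((Finset.range (k + 1)).filter fun j => a j ≤ c).sup a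

/-- The number of coins used by the greedy algorithm to pay the amount `c`,
using the currency with coins `a 0, …, a k`. -/
def grd (a : ℕ → ℕ) (k : ℕ) : ℕ → ℕ
  | 0 => 0
  | c + 1 =>
    if h : 1 ≤ bestCoin a k (c + 1) then
      grd a k (c + 1 - bestCoin a k (c + 1)) + 1
    else 0
  decreasing_by omega

/-- The minimal number of coins needed to pay the amount `c`,
using the currency with coins `a 0, …, a k`. -/
noncomputable def opt (a : ℕ → ℕ) (k : ℕ) (c : ℕ) : ℕ :=
  sInf {n | ∃ x : Fin (k + 1) → ℕ, (∑ i, x i) = n ∧ (∑ i, x i * a i.1) = c}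

/-- `a 0, …, a k` is a currency: it starts with the coin `1` and is strictly increasing. -/
def IsCurrency (a : ℕ → ℕ) (k : ℕ) : Prop :=
  a 0 = 1 ∧ ∀ i j : ℕ, i < j → j ≤ k → a i < a j

/-- The currency with coins `a 0, …, a k` is orderly: the greedy payment is
optimal for every positive amount. -/
def Orderly (a : ℕ → ℕ) (k : ℕ) : Prop :=
  ∀ c : ℕ, 0 < c → opt a k c = grd a k c

/-- The set `𝒜(a) = ⋃_{m ≥ 1} {m·a − l : 0 ≤ l ≤ m}`. -/
def calA (a : ℕ) : Set ℕ :=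
  {x | ∃ m l : ℕ, 1 ≤ m ∧ l ≤ m ∧ x = m * a - l}

-- auxiliary
def bfun (l : ℕ) : ℕ → ℕ := fun i =>
  if i ≤ l - 2 then i + 1 else if i = l - 1 then 2 * l - 2
  else if i = l then 2 * l - 1 else 4 * l - 4

def bb1 (l c : ℕ) : ℕ :=
  if 2*l-1 ≤ c then 2*l-1 else if c = 2*l-2 then 2*l-2 else if l-1 ≤ c then l-1 else c

def bb2 (l c : ℕ) : ℕ := if 4*l-4 ≤ c then 4*l-4 else bb1 l c

def gg (l c : ℕ) : ℕ :=
  if c = 0 then 0 else if c ≤ l-1 then 1 else if c ≤ 2*l-3 then 2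
  else if c ≤ 2*l-1 then 1 else if c ≤ 3*l-2 then 2 else 3

lemma grd_zero (a : ℕ → ℕ) (k : ℕ) : grd a k 0 = 0 := by rw [grd]

lemma grd_pos (a : ℕ → ℕ) (k c : ℕ) (hc : 0 < c) (hb : 1 ≤ bestCoin a k c) :
    grd a k c = grd a k (c - bestCoin a k c) + 1 := by
  obtain ⟨d, rfl⟩ : ∃ d, c = d + 1 := ⟨c - 1, by omega⟩
  rw [grd, dif_pos hb]

lemma bestCoin_big (l : ℕ) (hl : 3 ≤ l) (c : ℕ) :
    bestCoin (bfun l) (l + 1) c = bb2 l c := by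
  apply le_antisymm
  · apply Finset.sup_le
    intro j hj
    simp only [Finset.mem_filter, Finset.mem_range] at hj
    obtain ⟨hj1, hj2⟩ := hj
    simp only [bfun] at hj2 ⊢
    simp only [bb2, bb1]
    split_ifs at hj2 ⊢ <;> omega
  · rcases Nat.eq_zero_or_pos c with rfl | hc
    · have : bb2 l 0 = 0 := by simp only [bb2, bb1]; split_ifs <;> omega
      simp [this]
    · -- choose witness index
      have key : ∃ j, j < l + 2 ∧ bfun l j = bb2 l c ∧ bfun l j ≤ c := by
        by_cases h1 : 4*l-4 ≤ c
        · exact ⟨l+1, by omega, by simp only [bfun, bb2, bb1]; split_ifs <;> omega, by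
            simp only [bfun]; split_ifs <;> omega⟩
        · by_cases h2 : 2*l-1 ≤ c
          · exact ⟨l, by omega, by simp only [bfun, bb2, bb1]; split_ifs <;> omega, by
              simp only [bfun]; split_ifs <;> omega⟩
          · by_cases h3 : c = 2*l-2
            · exact ⟨l-1, by omega, by simp only [bfun, bb2, bb1]; split_ifs <;> omega, by
                simp only [bfun]; split_ifs <;> omega⟩
            · by_cases h4 : l-1 ≤ c
              · exact ⟨l-2, by omega, by simp only [bfun, bb2, bb1]; split_ifs <;> omega, by
                  simp only [bfun]; split_ifs <;> omega⟩
              · exact ⟨c-1, by omega, by simp only [bfun, bb2, bb1]; split_ifs <;> omega, by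
                  simp only [bfun]; split_ifs <;> omega⟩
      obtain ⟨j, hj1, hj2, hj3⟩ := key
      calc bb2 l c = bfun l j := hj2.symm
        _ ≤ _ := Finset.le_sup (by simp only [Finset.mem_filter, Finset.mem_range]; exact ⟨hj1, hj3⟩)

lemma bestCoin_small (l : ℕ) (hl : 3 ≤ l) (c : ℕ) :
    bestCoin (bfun l) l c = bb1 l c := by
  apply le_antisymm
  · apply Finset.sup_le
    intro j hj
    simp only [Finset.mem_filter, Finset.mem_range] at hj
    obtain ⟨hj1, hj2⟩ := hj
    simp only [bfun] at hj2 ⊢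
    simp only [bb1]
    split_ifs at hj2 ⊢ <;> omega
  · rcases Nat.eq_zero_or_pos c with rfl | hc
    · have : bb1 l 0 = 0 := by simp only [bb1]; split_ifs <;> omega
      simp [this]
    · have key : ∃ j, j < l + 1 ∧ bfun l j = bb1 l c ∧ bfun l j ≤ c := by
        by_cases h2 : 2*l-1 ≤ c
        · exact ⟨l, by omega, by simp only [bfun, bb1]; split_ifs <;> omega, by
            simp only [bfun]; split_ifs <;> omega⟩
        · by_cases h3 : c = 2*l-2
          · exact ⟨l-1, by omega, by simp only [bfun, bb1]; split_ifs <;> omega, by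
              simp only [bfun]; split_ifs <;> omega⟩
          · by_cases h4 : l-1 ≤ c
            · exact ⟨l-2, by omega, by simp only [bfun, bb1]; split_ifs <;> omega, by
                simp only [bfun]; split_ifs <;> omega⟩
            · exact ⟨c-1, by omega, by simp only [bfun, bb1]; split_ifs <;> omega, by
                simp only [bfun]; split_ifs <;> omega⟩
      obtain ⟨j, hj1, hj2, hj3⟩ := key
      calc bb1 l c = bfun l j := hj2.symm
        _ ≤ _ := Finset.le_sup (by simp only [Finset.mem_filter, Finset.mem_range]; exact ⟨hj1, hj3⟩)

lemma bb2_le (l c : ℕ) (hl : 3 ≤ l) (hc : 1 ≤ c) : 1 ≤ bb2 l c ∧ bb2 l c ≤ c := by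
  simp only [bb2, bb1]; split_ifs <;> omega

lemma grd_small (l : ℕ) (hl : 3 ≤ l) : ∀ c, c < 4*l-4 → grd (bfun l) (l+1) c = gg l c := by
  intro c
  induction c using Nat.strong_induction_on with
  | _ c ih =>
    intro hc
    rcases Nat.eq_zero_or_pos c with rfl | hp
    · rw [grd_zero]; simp [gg]
    · have hb := bestCoin_big l hl c
      obtain ⟨hb1, hb2⟩ := bb2_le l c hl hp
      rw [grd_pos _ _ _ hp (by omega), hb]
      rw [ih (c - bb2 l c) (by omega) (by omega)]
      have hcase : (c ≤ l-1 ∧ bb2 l c = c) ∨ (l ≤ c ∧ c ≤ 2*l-3 ∧ bb2 l c = l-1) ∨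
          (c = 2*l-2 ∧ bb2 l c = 2*l-2) ∨ (2*l-1 ≤ c ∧ c ≤ 4*l-5 ∧ bb2 l c = 2*l-1) := by
        simp only [bb2, bb1]; split_ifs <;> omega
      generalize hB : bb2 l c = B at hcase
      clear hb hb1 hb2 ih hB hc
      simp only [gg]; split_ifs <;> omega

lemma grd_step (l : ℕ) (hl : 3 ≤ l) (c : ℕ) (hc : 4*l-4 ≤ c) :
    grd (bfun l) (l+1) c = grd (bfun l) (l+1) (c - (4*l-4)) + 1 := by
  have hb := bestCoin_big l hl c
  have h2 : bb2 l c = 4*l-4 := by simp only [bb2]; split_ifs <;> omega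
  rw [grd_pos _ _ _ (by omega) (by omega), hb, h2]

/-- coin predicate -/
def IsCoin (l v : ℕ) : Prop := (1 ≤ v ∧ v ≤ l-1) ∨ v = 2*l-2 ∨ v = 2*l-1 ∨ v = 4*l-4

lemma keyK (l : ℕ) (hl : 3 ≤ l) : ∀ c v, IsCoin l v → v ≤ c →
    grd (bfun l) (l+1) c ≤ grd (bfun l) (l+1) (c - v) + 1 := by
  intro c
  induction c using Nat.strong_induction_on with
  | _ c ih =>
    intro v hv hvc
    by_cases h1 : 4*l-4 ≤ c - v
    · -- both big
      rw [grd_step l hl c (by omega), grd_step l hl (c - v) h1]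
      have h3 : c - v - (4*l-4) = (c - (4*l-4)) - v := by omega
      rw [h3]
      have := ih (c - (4*l-4)) (by omega) v hv (by omega)
      omega
    · by_cases h2 : 4*l-4 ≤ c
      · -- c big, c - v small
        rw [grd_step l hl c h2, grd_small l hl (c - v) (by omega),
            grd_small l hl (c - (4*l-4)) (by unfold IsCoin at hv; omega)]
        have hle : gg l (c - (4*l-4)) ≤ gg l (c - v) := by
          unfold IsCoin at hv
          simp only [gg]; split_ifs <;> omega
        omega
      · rw [grd_small l hl c (by omega), grd_small l hl (c - v) (by omega)]
        unfold IsCoin at hv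
        simp only [gg]; split_ifs <;> omega

lemma sum_split {m : ℕ} (g : Fin m → ℕ) (j : Fin m) :
    ∑ i, g i = g j + ∑ i ∈ Finset.univ.erase j, g i :=
  (Finset.add_sum_erase _ _ (Finset.mem_univ j)).symm

lemma sum_update {m : ℕ} (x : Fin m → ℕ) (j : Fin m) (v : ℕ) (f : Fin m → ℕ) :
    ∑ i, (Function.update x j v) i * f i = v * f j + ∑ i ∈ Finset.univ.erase j, x i * f i := by
  rw [sum_split (fun i => (Function.update x j v) i * f i) j]
  simp only [Function.update_self]
  congr 1
  apply Finset.sum_congr rfl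
  intro i hi
  rw [Function.update_of_ne (Finset.ne_of_mem_erase hi)]

lemma sum_update' {m : ℕ} (x : Fin m → ℕ) (j : Fin m) (v : ℕ) :
    ∑ i, (Function.update x j v) i = v + ∑ i ∈ Finset.univ.erase j, x i := by
  rw [sum_split (fun i => (Function.update x j v) i) j]
  simp only [Function.update_self]
  congr 1
  apply Finset.sum_congr rfl
  intro i hi
  rw [Function.update_of_ne (Finset.ne_of_mem_erase hi)]

lemma bfun_coin (l : ℕ) (hl : 3 ≤ l) (j : ℕ) : IsCoin l (bfun l j) := by
  simp only [bfun, IsCoin]; split_ifs <;> omega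

lemma exists_rep (l : ℕ) (hl : 3 ≤ l) : ∀ c, ∃ x : Fin (l + 2) → ℕ,
    (∑ i, x i) = grd (bfun l) (l+1) c ∧ (∑ i, x i * bfun l i.1) = c := by
  intro c
  induction c using Nat.strong_induction_on with
  | _ c ih =>
    rcases Nat.eq_zero_or_pos c with rfl | hp
    · exact ⟨0, by simp [grd_zero], by simp⟩
    · obtain ⟨hb1, hb2⟩ := bb2_le l c hl hp
      have hb := bestCoin_big l hl c
      -- witness coin index
      have key : ∃ j : Fin (l+2), bfun l j.1 = bb2 l c := by
        by_cases h1 : 4*l-4 ≤ c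
        · exact ⟨⟨l+1, by omega⟩, by simp only [bfun, bb2, bb1]; split_ifs <;> omega⟩
        · by_cases h2 : 2*l-1 ≤ c
          · exact ⟨⟨l, by omega⟩, by simp only [bfun, bb2, bb1]; split_ifs <;> omega⟩
          · by_cases h3 : c = 2*l-2
            · exact ⟨⟨l-1, by omega⟩, by simp only [bfun, bb2, bb1]; split_ifs <;> omega⟩
            · by_cases h4 : l-1 ≤ c
              · exact ⟨⟨l-2, by omega⟩, by simp only [bfun, bb2, bb1]; split_ifs <;> omega⟩
              · exact ⟨⟨c-1, by omega⟩, by simp only [bfun, bb2, bb1]; split_ifs <;> omega⟩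
      obtain ⟨j, hj⟩ := key
      obtain ⟨x, hx1, hx2⟩ := ih (c - bb2 l c) (by omega)
      refine ⟨Function.update x j (x j + 1), ?_, ?_⟩
      · rw [sum_update']
        rw [grd_pos _ _ _ hp (by omega), hb, ← hx1, sum_split x j]
        ring
      · rw [sum_update]
        rw [sum_split (fun i => x i * bfun l i.1) j] at hx2
        have : (x j + 1) * bfun l j.1 = x j * bfun l j.1 + bfun l j.1 := by ring
        omega

lemma grd_le_rep (l : ℕ) (hl : 3 ≤ l) : ∀ n (x : Fin (l + 2) → ℕ) c,
    (∑ i, x i) = n → (∑ i, x i * bfun l i.1) = c → grd (bfun l) (l+1) c ≤ n := by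
  intro n
  induction n with
  | zero =>
    intro x c h1 h2
    have : ∀ i ∈ Finset.univ, x i = 0 := by
      intro i _
      by_contra hne
      have := Finset.single_le_sum (f := x) (fun i _ => Nat.zero_le _) (Finset.mem_univ i)
      omega
    have hc : c = 0 := by
      rw [← h2]
      apply Finset.sum_eq_zero
      intro i hi; rw [this i hi]; ring
    rw [hc, grd_zero]
  | succ n IH =>
    intro x c h1 h2
    have hex : ∃ i : Fin (l+2), x i ≠ 0 := by
      by_contra hne
      push_neg at hne
      have : (∑ i, x i) = 0 := Finset.sum_eq_zero (fun i _ => hne i)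
      omega
    obtain ⟨i, hi⟩ := hex
    have hcoin : IsCoin l (bfun l i.1) := bfun_coin l hl i.1
    have hile : bfun l i.1 ≤ c := by
      have h3 : x i * bfun l i.1 ≤ ∑ j, x j * bfun l j.1 :=
        Finset.single_le_sum (f := fun j => x j * bfun l j.1)
          (fun _ _ => Nat.zero_le _) (Finset.mem_univ i)
      have h4 : bfun l i.1 ≤ x i * bfun l i.1 := Nat.le_mul_of_pos_left _ (by omega)
      omega
    have step := keyK l hl c (bfun l i.1) hcoin hile
    have hrec := IH (Function.update x i (x i - 1)) (c - bfun l i.1) ?_ ?_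
    · omega
    · rw [sum_update', sum_split x i] at *
      omega
    · rw [sum_update]
      have hsplit : (∑ j, x j * bfun l j.1)
          = x i * bfun l i.1 + ∑ j ∈ Finset.univ.erase i, x j * bfun l j.1 :=
        sum_split (fun j => x j * bfun l j.1) i
      rw [Nat.sub_one_mul]
      have h4 : bfun l i.1 ≤ x i * bfun l i.1 := Nat.le_mul_of_pos_left _ (by omega)
      omega

lemma opt_eq_grd (l : ℕ) (hl : 3 ≤ l) (c : ℕ) :
    opt (bfun l) (l+1) c = grd (bfun l) (l+1) c := by
  obtain ⟨x, hx1, hx2⟩ := exists_rep l hl c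
  apply le_antisymm
  · exact Nat.sInf_le ⟨x, hx1, hx2⟩
  · have hne : {n | ∃ x : Fin (l+1+1) → ℕ, (∑ i, x i) = n ∧ (∑ i, x i * bfun l i.1) = c}.Nonempty :=
      ⟨_, x, hx1, hx2⟩
    obtain ⟨y, hy1, hy2⟩ := Nat.sInf_mem hne
    exact grd_le_rep l hl _ y c hy1 hy2

lemma grd_small_counter (l : ℕ) (hl : 3 ≤ l) : grd (bfun l) l (4*l-4) = 3 := by
  have e1 : bb1 l (4*l-4) = 2*l-1 := by simp only [bb1]; split_ifs <;> omega
  have e2 : bb1 l (2*l-3) = l-1 := by simp only [bb1]; split_ifs <;> omega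
  have e3 : bb1 l (l-2) = l-2 := by simp only [bb1]; split_ifs <;> omega
  rw [grd_pos _ _ _ (by omega) (by rw [bestCoin_small l hl]; omega),
    bestCoin_small l hl, e1]
  have h1 : 4*l-4 - (2*l-1) = 2*l-3 := by omega
  rw [h1, grd_pos _ _ _ (by omega) (by rw [bestCoin_small l hl]; omega),
    bestCoin_small l hl, e2]
  have h2 : 2*l-3 - (l-1) = l-2 := by omega
  rw [h2, grd_pos _ _ _ (by omega) (by rw [bestCoin_small l hl]; omega),
    bestCoin_small l hl, e3]
  have h3 : l-2 - (l-2) = 0 := by omega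
  rw [h3, grd_zero]

lemma opt_small_counter (l : ℕ) (hl : 3 ≤ l) : opt (bfun l) l (4*l-4) ≤ 2 := by
  apply Nat.sInf_le
  refine ⟨Function.update (0 : Fin (l+1) → ℕ) ⟨l-1, by omega⟩ 2, ?_, ?_⟩
  · rw [sum_update']
    simp
  · rw [sum_update]
    have hb : bfun l (l-1) = 2*l-2 := by simp only [bfun]; split_ifs <;> omega
    simp [hb]
    omega

/-- For every `l ≥ 3` the currency
`B_l = (1, 2, …, l-1, 2l-2, 2l-1, 4l-4)` (with `l + 2` coins) is orderly, while
its prefix `(1, 2, …, l-1, 2l-2, 2l-1)` is not orderly. -/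
theorem B_family (l : ℕ) (hl : 3 ≤ l) :
    Orderly (fun i => if i ≤ l - 2 then i + 1 else if i = l - 1 then 2 * l - 2
      else if i = l then 2 * l - 1 else 4 * l - 4) (l + 1) ∧
    ¬ Orderly (fun i => if i ≤ l - 2 then i + 1 else if i = l - 1 then 2 * l - 2
      else if i = l then 2 * l - 1 else 4 * l - 4) l := by
  constructor
  · intro c _
    exact opt_eq_grd l hl c
  · intro h
    have h1 := h (4*l-4) (by omega)
    have h2 : grd (bfun l) l (4*l-4) = 3 := grd_small_counter l hl
    have h3 : opt (bfun l) l (4*l-4) ≤ 2 := opt_small_counter l hl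
    have h1' : opt (bfun l) l (4*l-4) = grd (bfun l) l (4*l-4) := h1
    omega
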